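/- Let F : [0,1] → ℝ be monotone increasing with F(0) = 0, F(1) = 1, and suppose |F(x) - F(y)| ≤ 5·|x-y|^c for some c > 0. Let f : [0,1] → ℝ be continuous and suppose there are C > 0 and k ≥ 1 such that |f(x) - f(y)| ≤ C·(-log₂|x-y|)^k · |F(x) - F(y)| for all x ≠ y in [0,1]. Then the Hausdorff dimension of the graph {(x, f(x)) : x ∈ [0,1]} equals 1. -/

import Mathlib

open Set Filter MeasureTheory Real
open scoped ENNReal NNReal Topology

set_option maxHeartbeats 2000000 in
/-- If `F` is a Hölder continuous distribution function and `f` satisfies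
`|f(x)-f(y)| ≤ C (-log₂|x-y|)^k |F(x)-F(y)|`, then the graph of `f` has
Hausdorff dimension 1. -/
theorem dimH_graph_eq_one (F f : ℝ → ℝ) (c : ℝ) (hc : 0 < c)
    (hFmono : MonotoneOn F (Set.Icc 0 1)) (hF0 : F 0 = 0) (hF1 : F 1 = 1)
    (hFhold : ∀ x ∈ Set.Icc (0:ℝ) 1, ∀ y ∈ Set.Icc (0:ℝ) 1,
      |F x - F y| ≤ 5 * |x - y| ^ c)
    (hf : ContinuousOn f (Set.Icc 0 1)) (C : ℝ) (hC : 0 < C) (k : ℕ) (hk : 1 ≤ k)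
    (hmod : ∀ x ∈ Set.Icc (0:ℝ) 1, ∀ y ∈ Set.Icc (0:ℝ) 1, x ≠ y →
      |f x - f y| ≤ C * (-Real.logb 2 |x - y|) ^ k * |F x - F y|) :
    dimH {q : ℝ × ℝ | ∃ x ∈ Set.Icc (0:ℝ) 1, q = (x, f x)} = 1 := by
  set G : Set (ℝ × ℝ) := {q : ℝ × ℝ | ∃ x ∈ Set.Icc (0:ℝ) 1, q = (x, f x)} with hG_def
  -- ## Lower bound
  have hlow : (1 : ℝ≥0∞) ≤ dimH G := by
    have h1 : dimH (Set.Icc (0:ℝ) 1) = 1 := by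
      have := dimH_of_mem_nhds (x := (1/2 : ℝ))
        (Icc_mem_nhds (by norm_num) (by norm_num) : Set.Icc (0:ℝ) 1 ∈ 𝓝 (1/2))
      simpa using this
    have h2 : Set.Icc (0:ℝ) 1 ⊆ Prod.fst '' G := fun x hx => ⟨(x, f x), ⟨x, hx, rfl⟩, rfl⟩
    calc (1:ℝ≥0∞) = dimH (Set.Icc (0:ℝ) 1) := h1.symm
      _ ≤ dimH (Prod.fst '' G) := dimH_mono h2
      _ ≤ dimH G := LipschitzWith.dimH_image_le LipschitzWith.prod_fst G
  -- ## Upper bound: for every real d > 1 the d-Hausdorff measure of G vanishes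
  have h2n : ∀ n : ℕ, (0:ℝ) < 2 ^ n := fun n => by positivity
  have key : ∀ d : ℝ, 1 < d → μH[d] G = 0 := by
    intro d hd
    have hd0 : 0 ≤ d := by linarith
    set a : ℝ := c * Real.log 2 / 2 with ha_def
    have hlog2 : 0 < Real.log 2 := Real.log_pos (by norm_num)
    have ha : 0 < a := by rw [ha_def]; positivity
    set τ : ℝ := Real.log 2 / a + 1 with hτ_def
    have hτ : 0 < τ := by rw [hτ_def]; positivity
    set K : ℝ := 5 * C * (Nat.factorial k : ℝ) * a⁻¹ ^ k with hK_def
    have hK : 0 < K := by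
      rw [hK_def]
      have : (0:ℝ) < (Nat.factorial k : ℝ) := by exact_mod_cast k.factorial_pos
      positivity
    set E : ℕ → ℝ := fun n => K * Real.exp (-(Real.log 2 + a) * n) with hE_def
    have hE : ∀ n, 0 < E n := fun n => mul_pos hK (Real.exp_pos _)
    -- dyadic intervals are inside [0,1]
    have hIsub : ∀ n j : ℕ, j < 2 ^ n →
        Set.Icc ((j:ℝ)/2^n) (((j:ℝ)+1)/2^n) ⊆ Set.Icc (0:ℝ) 1 := by
      intro n j hj x hx
      have hj' : (j:ℝ) + 1 ≤ 2 ^ n := by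
        have : (j:ℝ) + 1 ≤ ((2:ℝ))^n := by exact_mod_cast Nat.succ_le_of_lt hj
        simpa using this
      refine ⟨le_trans (by positivity) hx.1, hx.2.trans ?_⟩
      rw [div_le_one (h2n n)]; exact hj'
    have hlr : ∀ n j : ℕ, (j:ℝ)/2^n ≤ ((j:ℝ)+1)/2^n := by
      intro n j; gcongr; linarith
    have hΔ : ∀ n j : ℕ, j < 2 ^ n → 0 ≤ F (((j:ℝ)+1)/2^n) - F ((j:ℝ)/2^n) := by
      intro n j hj
      have hlm : (j:ℝ)/2^n ∈ Set.Icc (0:ℝ) 1 := hIsub n j hj ⟨le_refl _, hlr n j⟩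
      have hrm : ((j:ℝ)+1)/2^n ∈ Set.Icc (0:ℝ) 1 := hIsub n j hj ⟨hlr n j, le_refl _⟩
      exact sub_nonneg.2 (hFmono hlm hrm (hlr n j))
    -- F-increment over a dyadic interval controls all F-differences inside it
    have hFle : ∀ n j : ℕ, j < 2 ^ n → ∀ x ∈ Set.Icc ((j:ℝ)/2^n) (((j:ℝ)+1)/2^n),
        ∀ y ∈ Set.Icc ((j:ℝ)/2^n) (((j:ℝ)+1)/2^n),
        |F x - F y| ≤ F (((j:ℝ)+1)/2^n) - F ((j:ℝ)/2^n) := by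
      intro n j hj x hx y hy
      have hlm : (j:ℝ)/2^n ∈ Set.Icc (0:ℝ) 1 := hIsub n j hj ⟨le_refl _, hlr n j⟩
      have hrm : ((j:ℝ)+1)/2^n ∈ Set.Icc (0:ℝ) 1 := hIsub n j hj ⟨hlr n j, le_refl _⟩
      have hxm := hIsub n j hj hx
      have hym := hIsub n j hj hy
      have h1 := hFmono hxm hrm hx.2
      have h2 := hFmono hlm hxm hx.1
      have h3 := hFmono hym hrm hy.2
      have h4 := hFmono hlm hym hy.1
      rw [abs_sub_le_iff]
      constructor <;> linarith
    -- ## Oscillation estimate on dyadic intervals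
    have hosc : ∀ n j : ℕ, j < 2 ^ n → ∀ x ∈ Set.Icc ((j:ℝ)/2^n) (((j:ℝ)+1)/2^n),
        ∀ y ∈ Set.Icc ((j:ℝ)/2^n) (((j:ℝ)+1)/2^n),
        |f x - f y| ≤ C * (τ*n)^k * (F (((j:ℝ)+1)/2^n) - F ((j:ℝ)/2^n)) + E n := by
      intro n j hj x hx y hy
      have hΔj := hΔ n j hj
      have hterm1 : 0 ≤ C * (τ*n)^k * (F (((j:ℝ)+1)/2^n) - F ((j:ℝ)/2^n)) := by
        apply mul_nonneg (by positivity) hΔj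
      rcases eq_or_ne x y with rfl | hxy
      · simpa using add_nonneg hterm1 (hE n).le
      have hm0 : 0 < |x - y| := abs_pos.2 (sub_ne_zero.2 hxy)
      have hlen : |x - y| ≤ (2^n : ℝ)⁻¹ := by
        have he : ((j:ℝ)+1)/2^n - (j:ℝ)/2^n = (2^n : ℝ)⁻¹ := by
          field_simp; ring
        rw [abs_sub_le_iff]
        constructor <;> [skip; skip] <;>
          · have h1 := hx.1; have h2 := hx.2; have h3 := hy.1; have h4 := hy.2
            linarith
      have hm1 : |x - y| ≤ 1 := by
        refine hlen.trans ?_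
        rw [inv_le_one_iff₀]
        right; exact one_le_pow₀ (by norm_num)
      set t : ℝ := -Real.logb 2 |x - y| with ht_def
      have ht0 : 0 ≤ t := by
        have := Real.logb_nonpos (b := 2) (by norm_num) hm0.le hm1
        rw [ht_def]; linarith
      have hmain := hmod x (hIsub n j hj hx) y (hIsub n j hj hy) hxy
      rw [← ht_def] at hmain
      by_cases hcase : t ≤ τ * n
      · have h1 : t ^ k ≤ (τ*n)^k := pow_le_pow_left₀ ht0 hcase k
        have h2 := hFle n j hj x hx y hy
        calc |f x - f y| ≤ C * t^k * |F x - F y| := hmain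
          _ ≤ C * (τ*n)^k * (F (((j:ℝ)+1)/2^n) - F ((j:ℝ)/2^n)) := by
              apply mul_le_mul _ h2 (abs_nonneg _) (by positivity)
              exact mul_le_mul_of_nonneg_left h1 hC.le
          _ ≤ _ := le_add_of_nonneg_right (hE n).le
      · push_neg at hcase
        have hmrw : |x - y| = (2:ℝ) ^ (-t) := by
          rw [ht_def, neg_neg]
          exact (Real.rpow_logb two_pos (by norm_num) hm0).symm
        have hFxy : |F x - F y| ≤ 5 * Real.exp (-(2*a)*t) := by
          have h5 := hFhold x (hIsub n j hj hx) y (hIsub n j hj hy)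
          have hrc : |x - y| ^ c = Real.exp (-(2*a)*t) := by
            rw [hmrw, ← Real.rpow_mul (by norm_num : (0:ℝ) ≤ 2),
              Real.rpow_def_of_pos two_pos, ha_def]
            congr 1; ring
          rw [hrc] at h5; exact h5
        have htk : t ^ k ≤ (Nat.factorial k : ℝ) * a⁻¹^k * Real.exp (a * t) := by
          have h := Real.pow_div_factorial_le_exp _ (mul_nonneg ha.le ht0) k
          rw [mul_pow, div_le_iff₀ (by exact_mod_cast k.factorial_pos : (0:ℝ) < (Nat.factorial k : ℝ))] at h
          have hak : (0:ℝ) < a ^ k := by positivity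
          calc t ^ k = a⁻¹ ^ k * (a ^ k * t ^ k) := by
                rw [← mul_assoc, ← mul_pow, inv_mul_cancel₀ ha.ne', one_pow, one_mul]
            _ ≤ a⁻¹ ^ k * (Real.exp (a * t) * (Nat.factorial k : ℝ)) := by
                apply mul_le_mul_of_nonneg_left h (by positivity)
            _ = (Nat.factorial k : ℝ) * a⁻¹^k * Real.exp (a * t) := by ring
        have hstep : |f x - f y| ≤ K * Real.exp (-(a*t)) := by
          calc |f x - f y| ≤ C * t^k * |F x - F y| := hmain
            _ ≤ C * ((Nat.factorial k : ℝ) * a⁻¹^k * Real.exp (a * t)) * (5 * Real.exp (-(2*a)*t)) := by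
                apply mul_le_mul _ hFxy (abs_nonneg _) (by positivity)
                exact mul_le_mul_of_nonneg_left htk hC.le
            _ = K * (Real.exp (a*t) * Real.exp (-(2*a)*t)) := by rw [hK_def]; ring
            _ = K * Real.exp (-(a*t)) := by rw [← Real.exp_add]; congr 1; ring
        have hfin : K * Real.exp (-(a*t)) ≤ E n := by
          rw [hE_def]
          apply mul_le_mul_of_nonneg_left _ hK.le
          apply Real.exp_le_exp.2
          have : -(Real.log 2 + a) * n = -(a * (τ * n)) := by
            rw [hτ_def]; field_simp
          rw [this]
          have := mul_le_mul_of_nonneg_left hcase.le ha.le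
          linarith
        calc |f x - f y| ≤ K * Real.exp (-(a*t)) := hstep
          _ ≤ E n := hfin
          _ ≤ _ := le_add_of_nonneg_left hterm1
    -- ## minimum of f on each dyadic interval
    set B : ℕ → ℕ → ℝ := fun n j => sInf (f '' Set.Icc ((j:ℝ)/2^n) (((j:ℝ)+1)/2^n)) with hB_def
    have hBprop : ∀ n j : ℕ, j < 2 ^ n →
        (∀ x ∈ Set.Icc ((j:ℝ)/2^n) (((j:ℝ)+1)/2^n), B n j ≤ f x) ∧
        (∀ x ∈ Set.Icc ((j:ℝ)/2^n) (((j:ℝ)+1)/2^n),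
          f x - B n j ≤ C * (τ*n)^k * (F (((j:ℝ)+1)/2^n) - F ((j:ℝ)/2^n)) + E n) := by
      intro n j hj
      obtain ⟨x₀, hx₀, hmin⟩ := isCompact_Icc.exists_isMinOn (Set.nonempty_Icc.2 (hlr n j))
        (hf.mono (hIsub n j hj))
      have hminle : ∀ x ∈ Set.Icc ((j:ℝ)/2^n) (((j:ℝ)+1)/2^n), f x₀ ≤ f x :=
        fun x hx => (isMinOn_iff.1 hmin) x hx
      have hBeq : B n j = f x₀ := by
        rw [hB_def]
        apply le_antisymm
        · exact csInf_le ⟨f x₀, by rintro v ⟨x, hx, rfl⟩; exact hminle x hx⟩ ⟨x₀, hx₀, rfl⟩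
        · exact le_csInf ⟨f x₀, ⟨x₀, hx₀, rfl⟩⟩ (by rintro v ⟨x, hx, rfl⟩; exact hminle x hx)
      constructor
      · intro x hx; rw [hBeq]; exact hminle x hx
      · intro x hx
        rw [hBeq]
        calc f x - f x₀ ≤ |f x - f x₀| := le_abs_self _
          _ ≤ _ := hosc n j hj x hx x₀ hx₀
    -- ## the covering by squares
    set N : ℕ → ℕ → ℕ := fun n j =>
      ⌈(C * (τ*n)^k * (F (((j:ℝ)+1)/2^n) - F ((j:ℝ)/2^n)) + E n) * 2^n⌉₊ + 1 with hN_def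
    set S : ∀ n : ℕ, (Σ j : Fin (2^n), Fin (N n j.val)) → Set (ℝ × ℝ) := fun n p =>
      Set.Icc (((p.1 : ℕ):ℝ)/2^n) ((((p.1 : ℕ):ℝ)+1)/2^n) ×ˢ
        Set.Icc (B n p.1 + ((p.2 : ℕ):ℝ)/2^n) (B n p.1 + (((p.2 : ℕ):ℝ)+1)/2^n) with hS_def
    have hdiam : ∀ n p, EMetric.diam (S n p) ≤ ENNReal.ofReal ((2^n : ℝ)⁻¹) := by
      intro n p
      apply EMetric.diam_le
      intro q hq q' hq'
      obtain ⟨hq1, hq2⟩ := hq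
      obtain ⟨hq1', hq2'⟩ := hq'
      rw [Set.mem_Icc] at hq1 hq2 hq1' hq2'
      rw [Prod.edist_eq]
      have he : (((p.1:ℕ):ℝ)+1)/2^n - ((p.1:ℕ):ℝ)/2^n = (2^n : ℝ)⁻¹ := by field_simp; ring
      have he2 : (B n p.1 + (((p.2:ℕ):ℝ)+1)/2^n) - (B n p.1 + ((p.2:ℕ):ℝ)/2^n)
          = (2^n : ℝ)⁻¹ := by field_simp; ring
      apply max_le
      · rw [edist_dist, Real.dist_eq]
        apply ENNReal.ofReal_le_ofReal
        rw [abs_sub_le_iff]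
        constructor <;> linarith [hq1.1, hq1.2, hq1'.1, hq1'.2]
      · rw [edist_dist, Real.dist_eq]
        apply ENNReal.ofReal_le_ofReal
        rw [abs_sub_le_iff]
        constructor <;> linarith [hq2.1, hq2.2, hq2'.1, hq2'.2]
    have hr0 : Tendsto (fun n : ℕ => ENNReal.ofReal ((2^n : ℝ)⁻¹)) atTop (𝓝 0) := by
      rw [← ENNReal.ofReal_zero]
      apply ENNReal.tendsto_ofReal
      have : (fun n : ℕ => ((2:ℝ)^n)⁻¹) = fun n : ℕ => ((2:ℝ)⁻¹)^n := by
        funext n; rw [inv_pow]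
      rw [this]
      exact tendsto_pow_atTop_nhds_zero_of_lt_one (by norm_num) (by norm_num)
    -- ## the squares cover the graph
    have hcov : ∀ n : ℕ, G ⊆ ⋃ p, S n p := by
      intro n q hq
      obtain ⟨x, hx, rfl⟩ := hq
      have h2n1 : 1 ≤ 2 ^ n := Nat.one_le_two_pow
      set j0 : ℕ := min ⌊x * 2^n⌋₊ (2^n - 1) with hj0_def
      have hj0 : j0 < 2 ^ n := lt_of_le_of_lt (min_le_right _ _) (Nat.sub_lt (by positivity) one_pos)
      have hxl : (j0:ℝ)/2^n ≤ x := by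
        rw [div_le_iff₀ (h2n n)]
        have hmin1 : j0 ≤ ⌊x * 2^n⌋₊ := min_le_left _ _
        calc (j0:ℝ) ≤ (⌊x * 2^n⌋₊ : ℝ) := by exact_mod_cast hmin1
          _ ≤ x * 2^n := Nat.floor_le (by have := hx.1; positivity)
      have hxr : x ≤ ((j0:ℝ)+1)/2^n := by
        rw [le_div_iff₀ (h2n n)]
        rcases le_or_gt (2^n - 1) ⌊x * 2^n⌋₊ with hcase | hcase
        · have hj0e : j0 = 2^n - 1 := min_eq_right hcase
          have h1 : ((j0:ℝ)+1) = (2:ℝ)^n := by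
            rw [hj0e]
            push_cast [Nat.cast_sub h2n1]
            ring
          rw [h1]
          nlinarith [hx.2, h2n n]
        · have hj0e : j0 = ⌊x * 2^n⌋₊ := min_eq_left hcase.le
          have := Nat.lt_floor_add_one (x * 2^n)
          rw [← hj0e] at this
          push_cast at this
          linarith
      have hxI : x ∈ Set.Icc ((j0:ℝ)/2^n) (((j0:ℝ)+1)/2^n) := ⟨hxl, hxr⟩
      obtain ⟨hB1, hB2⟩ := hBprop n j0 hj0
      have hfxB : 0 ≤ f x - B n j0 := sub_nonneg.2 (hB1 x hxI)
      set i0 : ℕ := ⌊(f x - B n j0) * 2^n⌋₊ with hi0_def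
      have hi0 : i0 < N n j0 := by
        have h1 : (f x - B n j0) * 2^n ≤
            (C * (τ*n)^k * (F (((j0:ℝ)+1)/2^n) - F ((j0:ℝ)/2^n)) + E n) * 2^n :=
          mul_le_mul_of_nonneg_right (hB2 x hxI) (h2n n).le
        calc i0 ≤ ⌈(f x - B n j0) * 2^n⌉₊ := Nat.floor_le_ceil _
          _ ≤ ⌈(C * (τ*n)^k * (F (((j0:ℝ)+1)/2^n) - F ((j0:ℝ)/2^n)) + E n) * 2^n⌉₊ :=
            Nat.ceil_le_ceil h1
          _ < N n j0 := Nat.lt_succ_self _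
      refine Set.mem_iUnion.2 ⟨⟨⟨j0, hj0⟩, ⟨i0, hi0⟩⟩, ?_⟩
      refine ⟨hxI, ?_⟩
      have hfl : (i0:ℝ)/2^n ≤ f x - B n j0 := by
        rw [div_le_iff₀ (h2n n)]
        exact Nat.floor_le (mul_nonneg hfxB (h2n n).le)
      have hfr : f x - B n j0 ≤ ((i0:ℝ)+1)/2^n := by
        rw [le_div_iff₀ (h2n n)]
        exact (Nat.lt_floor_add_one _).le
      constructor <;> simp only [] <;> [linarith [hfl]; linarith [hfr]]
    -- ## bounding the sum of diameters
    set A : ℕ → ℝ := fun n =>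
      (C * (τ*n)^k * 2^n + E n * 4^n + 2 * 2^n) * ((2^n : ℝ)⁻¹) ^ d with hA_def
    have hsum : ∀ n : ℕ, (∑ p : (Σ j : Fin (2^n), Fin (N n j.val)), EMetric.diam (S n p) ^ d)
        ≤ ENNReal.ofReal (A n) := by
      intro n
      have step1 : ∀ p : (Σ j : Fin (2^n), Fin (N n j.val)),
          EMetric.diam (S n p) ^ d ≤ ENNReal.ofReal (((2^n : ℝ)⁻¹) ^ d) := by
        intro p
        calc EMetric.diam (S n p) ^ d ≤ (ENNReal.ofReal ((2^n : ℝ)⁻¹)) ^ d :=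
            ENNReal.rpow_le_rpow (hdiam n p) hd0
          _ = ENNReal.ofReal (((2^n : ℝ)⁻¹) ^ d) := ENNReal.ofReal_rpow_of_pos (by positivity)
      have hcard : ((Fintype.card (Σ j : Fin (2^n), Fin (N n j.val))) : ℝ)
          ≤ C * (τ*n)^k * 2^n + E n * 4^n + 2 * 2^n := by
        have h1 : Fintype.card (Σ j : Fin (2^n), Fin (N n j.val)) = ∑ j : Fin (2^n), N n j.val := by
          simp [Fintype.card_sigma]
        rw [h1]
        have hNle : ∀ j : ℕ, j < 2^n → (N n j : ℝ) ≤
            (C * (τ*n)^k * (F (((j:ℝ)+1)/2^n) - F ((j:ℝ)/2^n)) + E n) * 2^n + 2 := by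
          intro j hj
          have hL0 : 0 ≤ (C * (τ*n)^k * (F (((j:ℝ)+1)/2^n) - F ((j:ℝ)/2^n)) + E n) * 2^n :=
            mul_nonneg (add_nonneg (mul_nonneg (by positivity) (hΔ n j hj)) (hE n).le) (h2n n).le
          have h2 := Nat.ceil_lt_add_one hL0
          rw [hN_def]
          push_cast
          linarith
        have htel : ∑ j ∈ Finset.range (2^n), (F (((j:ℝ)+1)/2^n) - F ((j:ℝ)/2^n)) = 1 := by
          have h := Finset.sum_range_sub (f := fun j : ℕ => F ((j:ℝ)/2^n)) (2^n)
          push_cast at h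
          rw [div_self (h2n n).ne'] at h
          norm_num at h
          rw [hF0, hF1] at h
          simpa using h
        rw [Nat.cast_sum]
        calc ∑ j : Fin (2^n), ((N n j.val : ℕ) : ℝ)
            ≤ ∑ j : Fin (2^n),
              ((C * (τ*n)^k * (F (((j.val:ℝ)+1)/2^n) - F ((j.val:ℝ)/2^n)) + E n) * 2^n + 2) :=
              Finset.sum_le_sum (fun j _ => hNle j.val j.isLt)
          _ = ∑ j ∈ Finset.range (2^n),
              ((C * (τ*n)^k * (F (((j:ℝ)+1)/2^n) - F ((j:ℝ)/2^n)) + E n) * 2^n + 2) :=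
              Fin.sum_univ_eq_sum_range (fun j : ℕ =>
                ((C * (τ*n)^k * (F (((j:ℝ)+1)/2^n) - F ((j:ℝ)/2^n)) + E n) * 2^n + 2)) (2^n)
          _ = ∑ j ∈ Finset.range (2^n),
              ((C * (τ*n)^k * 2^n) * (F (((j:ℝ)+1)/2^n) - F ((j:ℝ)/2^n)) + (E n * 2^n + 2)) := by
              apply Finset.sum_congr rfl; intro j _; ring
          _ = (C * (τ*n)^k * 2^n) *
              (∑ j ∈ Finset.range (2^n), (F (((j:ℝ)+1)/2^n) - F ((j:ℝ)/2^n)))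
              + 2^n * (E n * 2^n + 2) := by
              rw [Finset.sum_add_distrib, ← Finset.mul_sum, Finset.sum_const, Finset.card_range,
                nsmul_eq_mul]
              push_cast
              ring
          _ = C * (τ*n)^k * 2^n + E n * 4^n + 2 * 2^n := by
              rw [htel]
              have h4 : (4:ℝ)^n = 2^n * 2^n := by rw [← mul_pow]; norm_num
              rw [h4]; ring
      have hA0' : (0:ℝ) ≤ C * (τ*n)^k * 2^n + E n * 4^n + 2 * 2^n :=
        le_trans (by positivity) hcard
      calc (∑ p : (Σ j : Fin (2^n), Fin (N n j.val)), EMetric.diam (S n p) ^ d)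
          ≤ ∑ _p : (Σ j : Fin (2^n), Fin (N n j.val)), ENNReal.ofReal (((2^n : ℝ)⁻¹) ^ d) :=
            Finset.sum_le_sum (fun p _ => step1 p)
        _ = (Fintype.card (Σ j : Fin (2^n), Fin (N n j.val)) : ℝ≥0∞) *
              ENNReal.ofReal (((2^n : ℝ)⁻¹) ^ d) := by
            rw [Finset.sum_const, Finset.card_univ, nsmul_eq_mul]
        _ ≤ ENNReal.ofReal (C * (τ*n)^k * 2^n + E n * 4^n + 2 * 2^n) *
              ENNReal.ofReal (((2^n : ℝ)⁻¹) ^ d) := by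
            apply mul_le_mul_left
            rw [← ENNReal.ofReal_natCast]
            exact ENNReal.ofReal_le_ofReal hcard
        _ = ENNReal.ofReal (A n) := by
            rw [← ENNReal.ofReal_mul hA0', hA_def]
    -- ## conclusion
    have hμ := MeasureTheory.Measure.hausdorffMeasure_le_liminf_sum d G (fun n : ℕ => ENNReal.ofReal ((2^n : ℝ)⁻¹)) hr0
      S (Eventually.of_forall hdiam) (Eventually.of_forall hcov)
    set w : ℝ := (2:ℝ) ^ (-d) with hw_def
    have hw0 : 0 < w := Real.rpow_pos_of_pos two_pos _
    have hw2 : 2 * w < 1 := by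
      have h1 : (2:ℝ) ^ (-d) < (2:ℝ) ^ (-1 : ℝ) :=
        Real.rpow_lt_rpow_of_exponent_lt (by norm_num) (by linarith)
      rw [Real.rpow_neg_one] at h1
      rw [hw_def]; linarith
    have hrw : ∀ n : ℕ, ((2^n : ℝ)⁻¹) ^ d = w ^ n := by
      intro n
      rw [hw_def, ← Real.rpow_natCast (2:ℝ) n, ← Real.rpow_neg (by norm_num : (0:ℝ) ≤ 2),
        ← Real.rpow_natCast ((2:ℝ) ^ (-d)) n, ← Real.rpow_mul (by norm_num : (0:ℝ) ≤ 2),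
        ← Real.rpow_mul (by norm_num : (0:ℝ) ≤ 2)]
      congr 1; ring
    have he : Real.exp (-(Real.log 2 + a)) = 2⁻¹ * Real.exp (-a) := by
      rw [neg_add, Real.exp_add, Real.exp_neg, Real.exp_log two_pos]
    have hgeo2 : (0:ℝ) ≤ 4 * w * Real.exp (-(Real.log 2 + a)) := by positivity
    have hgeo2' : 4 * w * Real.exp (-(Real.log 2 + a)) < 1 := by
      have hea : Real.exp (-a) < 1 := Real.exp_lt_one_iff.2 (by linarith)
      have h24 : 4 * w * (2⁻¹ * Real.exp (-a)) = 2 * w * Real.exp (-a) := by ring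
      rw [he, h24]
      calc 2 * w * Real.exp (-a) ≤ 2 * w * 1 :=
            mul_le_mul_of_nonneg_left hea.le (by positivity)
        _ < 1 := by linarith
    have hA0 : Tendsto A atTop (𝓝 0) := by
      have heq : ∀ n : ℕ, A n = (C * τ^k) * ((n:ℝ)^k * (2*w)^n)
          + K * ((4 * w * Real.exp (-(Real.log 2 + a)))^n) + 2 * (2*w)^n := by
        intro n
        have h4 : (4:ℝ)^n = 2^n * 2^n := by rw [← mul_pow]; norm_num
        have hexp : Real.exp (-(Real.log 2 + a) * n) = Real.exp (-(Real.log 2 + a)) ^ n := by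
          rw [← Real.exp_nat_mul]; ring_nf
        have h44 : (4 * w * Real.exp (-(Real.log 2 + a)))^n
            = (2^n * 2^n) * (w^n * Real.exp (-(Real.log 2 + a)) ^ n) := by
          rw [mul_pow, mul_pow, h4]; ring
        have h2w : ((2:ℝ)*w)^n = 2^n * w^n := mul_pow 2 w n
        have hτn : (τ*(n:ℝ))^k = τ^k*(n:ℝ)^k := mul_pow τ (n:ℝ) k
        rw [hA_def]
        simp only []
        rw [hrw n, hE_def]
        simp only []
        rw [hexp, h4, h44, h2w, hτn]
        clear_value a τ K w
        ring
      have t1 : Tendsto (fun n : ℕ => (n:ℝ)^k * (2*w)^n) atTop (𝓝 0) :=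
        tendsto_pow_const_mul_const_pow_of_lt_one k (by positivity) hw2
      have t2 : Tendsto (fun n : ℕ => (4 * w * Real.exp (-(Real.log 2 + a)))^n) atTop (𝓝 0) :=
        tendsto_pow_atTop_nhds_zero_of_lt_one hgeo2 hgeo2'
      have t3 : Tendsto (fun n : ℕ => (2*w)^n) atTop (𝓝 0) :=
        tendsto_pow_atTop_nhds_zero_of_lt_one (by positivity) (by linarith)
      have hlim := ((t1.const_mul (C * τ^k)).add (t2.const_mul K)).add (t3.const_mul 2)
      simp only [mul_zero, add_zero] at hlim
      exact Tendsto.congr (fun n => (heq n).symm) hlim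
    have hsum0 : Tendsto (fun n : ℕ => ∑ p : (Σ j : Fin (2^n), Fin (N n j.val)),
        EMetric.diam (S n p) ^ d) atTop (𝓝 0) := by
      have hofA : Tendsto (fun n : ℕ => ENNReal.ofReal (A n)) atTop (𝓝 0) := by
        rw [← ENNReal.ofReal_zero]; exact ENNReal.tendsto_ofReal hA0
      exact tendsto_of_tendsto_of_tendsto_of_le_of_le tendsto_const_nhds hofA
        (fun n => zero_le) hsum
    rw [(show Tendsto (fun n : ℕ => ∑ p : (Σ j : Fin (2^n), Fin (N n j.val)), Metric.ediam (S n p) ^ d) atTop (𝓝 0) from hsum0).liminf_eq] at hμ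
    exact le_antisymm hμ zero_le
  have hup : dimH G ≤ 1 := by
    by_contra hcon
    push_neg at hcon
    obtain ⟨d, hd1, hdG⟩ := ENNReal.lt_iff_exists_nnreal_btwn.1 hcon
    have hd1' : (1:ℝ) < (d:ℝ) := by exact_mod_cast hd1
    have h0 : μH[(d:ℝ)] G = 0 := key (d:ℝ) hd1'
    have hinf : μH[((d:ℝ≥0):ℝ)] G = ⊤ := hausdorffMeasure_of_lt_dimH hdG
    rw [h0] at hinf
    exact ENNReal.zero_ne_top hinf
  exact le_antisymm hup hlow
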